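/- Iterating minimum-degree vertex deletion: if H is a hypergraph on n vertices with m hyperedges each of size at most d, and one repeatedly deletes a minimum-degree vertex (together with all incident hyperedges) for n - k steps, then the number of hyperedges remaining at the end is at least m · ∏_{θ=1}^{n-k} (1 - d/(n - θ + 1)). -/

import Mathlib

private lemma deg_sum_le' {V : Type*} [DecidableEq V] (d : ℕ) (T : Finset V)
    (F : Multiset (Finset V)) (hF : ∀ e ∈ F, e ⊆ T ∧ e.card ≤ d) :
    ∑ u ∈ T, (F.filter (fun e => u ∈ e)).card ≤ d * Multiset.card F := by
  induction F using Multiset.induction_on with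
  | empty => simp
  | cons e F ih =>
    have he := hF e (Multiset.mem_cons_self e F)
    have ih' := ih (fun e' he' => hF e' (Multiset.mem_cons_of_mem he'))
    have h1 : ∀ u ∈ T, (Multiset.filter (fun e' => u ∈ e') (e ::ₘ F)).card
        = (if u ∈ e then 1 else 0) + (Multiset.filter (fun e' => u ∈ e') F).card := by
      intro u _
      by_cases h : u ∈ e <;> simp [Multiset.filter_cons, h] <;> omega
    rw [Finset.sum_congr rfl h1, Finset.sum_add_distrib]
    have h2 : ∑ u ∈ T, (if u ∈ e then 1 else 0) = e.card := by
      rw [Finset.sum_boole]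
      simp only [Nat.cast_id]
      congr 1
      rw [Finset.filter_mem_eq_inter, Finset.inter_eq_right.mpr he.1]
    rw [h2]
    simp only [Multiset.card_cons, Nat.mul_succ]
    omega

theorem decremental_greedy_weight_bound
    {V : Type*} [Fintype V] [DecidableEq V] (n k d m : ℕ)
    (hcard : Fintype.card V = n) (hdk : d ≤ k) (hkn : k ≤ n)
    (E : Multiset (Finset V)) (hm : E.card = m)
    (hE : ∀ e ∈ E, e.Nonempty ∧ e.card ≤ d)
    (S : ℕ → Finset V) (v : ℕ → V)
    (hS0 : S 0 = Finset.univ)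
    (hstep : ∀ θ < n - k,
      v θ ∈ S θ ∧
      (∀ u ∈ S θ,
        (E.filter (fun e => e ⊆ S θ ∧ v θ ∈ e)).card ≤
        (E.filter (fun e => e ⊆ S θ ∧ u ∈ e)).card) ∧
      S (θ + 1) = (S θ).erase (v θ)) :
    (m : ℚ) * ∏ θ ∈ Finset.Icc 1 (n - k), (1 - (d : ℚ) / ((n : ℚ) - θ + 1)) ≤
      ((E.filter (fun e => e ⊆ S (n - k))).card : ℚ) := by
  -- cardinality of S t
  have hScard : ∀ t ≤ n - k, (S t).card = n - t := by
    intro t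
    induction t with
    | zero => intro _; simp [hS0, Finset.card_univ, hcard]
    | succ t ih =>
      intro ht
      have ht' : t < n - k := by omega
      obtain ⟨hv, _, hS⟩ := hstep t ht'
      rw [hS, Finset.card_erase_of_mem hv, ih (le_of_lt ht')]
      omega
  -- main induction
  suffices H : ∀ t ≤ n - k,
      (m : ℚ) * ∏ θ ∈ Finset.Icc 1 t, (1 - (d : ℚ) / ((n : ℚ) - θ + 1)) ≤
        ((E.filter (fun e => e ⊆ S t)).card : ℚ) from H (n - k) le_rfl
  intro t
  induction t with
  | zero =>
    intro _
    simp only [Finset.Icc_self, Finset.Icc_eq_empty_of_lt Nat.zero_lt_one,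
      Finset.prod_empty, mul_one]
    have : E.filter (fun e => e ⊆ S 0) = E := by
      rw [Multiset.filter_eq_self]
      intro e _; rw [hS0]; exact Finset.subset_univ e
    rw [this, hm]
  | succ t ih =>
    intro ht
    have ht' : t < n - k := by omega
    obtain ⟨hv, hmin, hS⟩ := hstep t ht'
    have ihh := ih (le_of_lt ht')
    -- notation
    set f : ℕ := (E.filter (fun e => e ⊆ S t)).card with hf
    set g : ℕ := (E.filter (fun e => e ⊆ S (t+1))).card with hg
    set deg : ℕ := (E.filter (fun e => e ⊆ S t ∧ v t ∈ e)).card with hdeg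
    -- g = f - deg (in fact f = g + deg)
    have hsplit : f = g + deg := by
      have h1 : E.filter (fun e => e ⊆ S (t+1)) =
          E.filter (fun e => e ⊆ S t ∧ v t ∉ e) := by
        apply Multiset.filter_congr
        intro e _
        rw [hS]
        constructor
        · intro h; exact ⟨h.trans (Finset.erase_subset _ _),
            fun hc => (Finset.mem_erase.mp (h hc)).1 rfl⟩
        · intro ⟨h1, h2⟩ x hx
          exact Finset.mem_erase.mpr ⟨fun hxe => h2 (hxe ▸ hx), h1 hx⟩
      have h2 : E.filter (fun e => e ⊆ S t ∧ v t ∉ e) +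
          E.filter (fun e => e ⊆ S t ∧ v t ∈ e) = E.filter (fun e => e ⊆ S t) := by
        rw [Multiset.filter_add_filter]
        have ha : E.filter (fun e => (e ⊆ S t ∧ v t ∉ e) ∧ (e ⊆ S t ∧ v t ∈ e)) = 0 :=
          Multiset.filter_eq_nil.mpr (fun e _ h => absurd h.2.2 h.1.2)
        have hb : E.filter (fun e => (e ⊆ S t ∧ v t ∉ e) ∨ (e ⊆ S t ∧ v t ∈ e)) =
            E.filter (fun e => e ⊆ S t) :=
          Multiset.filter_congr (fun e _ => by by_cases h : v t ∈ e <;> simp [h] <;> tauto)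
        rw [ha, hb, add_zero]
      rw [hf, ← h2, Multiset.card_add, ← h1, hg]
    -- sum of degrees bound
    have hsum : (n - t) * deg ≤ d * f := by
      have hTcard : (S t).card = n - t := hScard t (le_of_lt ht')
      have h1 : (S t).card • deg ≤
          ∑ u ∈ S t, (E.filter (fun e => e ⊆ S t ∧ u ∈ e)).card :=
        Finset.card_nsmul_le_sum _ _ _ (fun u hu => hmin u hu)
      have h2 : ∀ u ∈ S t, (E.filter (fun e => e ⊆ S t ∧ u ∈ e)).card =
          ((E.filter (fun e => e ⊆ S t)).filter (fun e => u ∈ e)).card := by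
        intro u _
        rw [Multiset.filter_filter]
        congr 1
        exact Multiset.filter_congr (fun e _ => by tauto)
      have h3 := deg_sum_le' d (S t) (E.filter (fun e => e ⊆ S t)) ?_
      · calc (n - t) * deg = (S t).card • deg := by rw [hTcard, smul_eq_mul]
          _ ≤ _ := h1
          _ = ∑ u ∈ S t, ((E.filter (fun e => e ⊆ S t)).filter (fun e => u ∈ e)).card :=
            Finset.sum_congr rfl h2
          _ ≤ d * f := h3
      · intro e he
        rw [Multiset.mem_filter] at he
        exact ⟨he.2, (hE e he.1).2⟩
    -- close in ℚ
    have hnt : (0 : ℚ) < ((n - t : ℕ) : ℚ) := by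
      have : 0 < n - t := by omega
      exact_mod_cast this
    have hdegQ : (deg : ℚ) ≤ (d : ℚ) * f / ((n - t : ℕ) : ℚ) := by
      rw [le_div_iff₀ hnt]
      calc (deg : ℚ) * ((n - t : ℕ) : ℚ) = (((n - t) * deg : ℕ) : ℚ) := by push_cast; ring
        _ ≤ ((d * f : ℕ) : ℚ) := by exact_mod_cast hsum
        _ = (d : ℚ) * f := by push_cast; ring
    have hfactor : (1 : ℚ) - (d : ℚ) / (((n : ℚ)) - ((t + 1 : ℕ) : ℚ) + 1) =
        1 - (d : ℚ) / ((n - t : ℕ) : ℚ) := by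
      congr 1
      congr 1
      have : ((n - t : ℕ) : ℚ) = (n : ℚ) - (t : ℚ) := by
        have : t ≤ n := by omega
        push_cast [this]; ring
      rw [this]; push_cast; ring
    rw [Finset.prod_Icc_succ_top (by omega), ← mul_assoc]
    have hfac_nonneg : (0 : ℚ) ≤ 1 - (d : ℚ) / ((n - t : ℕ) : ℚ) := by
      rw [sub_nonneg, div_le_one hnt]
      have : d ≤ n - t := by omega
      exact_mod_cast this
    calc ((m : ℚ) * ∏ θ ∈ Finset.Icc 1 t, (1 - (d : ℚ) / ((n : ℚ) - θ + 1))) *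
          (1 - (d : ℚ) / ((n : ℚ) - ((t + 1 : ℕ) : ℚ) + 1))
        = ((m : ℚ) * ∏ θ ∈ Finset.Icc 1 t, (1 - (d : ℚ) / ((n : ℚ) - θ + 1))) *
          (1 - (d : ℚ) / ((n - t : ℕ) : ℚ)) := by rw [hfactor]
      _ ≤ (f : ℚ) * (1 - (d : ℚ) / ((n - t : ℕ) : ℚ)) := by
          apply mul_le_mul_of_nonneg_right ihh hfac_nonneg
      _ = (f : ℚ) - (d : ℚ) * f / ((n - t : ℕ) : ℚ) := by
          field_simp
      _ ≤ (f : ℚ) - (deg : ℚ) := by linarith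
      _ = (g : ℚ) := by rw [hsplit]; push_cast; ring
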